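/- Let (Λ_j)_{j∈ℕ₀} be finite index sets with #Λ_j ~ 2^{2j}, and for admissible parameters (α,p,q) define the sequence space b^α_{p,q} of all complex sequences a = (a_{j,λ}) with quasi-norm ( Σ_j 2^{j(α + 2(1/2 - 1/p))q} ( Σ_{λ∈Λ_j} |a_{j,λ}|^p )^{q/p} )^{1/q} finite. If γ < 0, then there is no continuous embedding b^{α+γ}_{p_0,q_0} ↪ b^α_{p_1,q_1}: indeed, the sequence a* with a*_{j,λ} := 2^{-j(1 + α + γ/2)} for all λ ∈ Λ_j belongs to b^{α+γ}_{p_0,q_0} but not to b^α_{p_1,q_1}. -/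
import Mathlib


open scoped ENNReal NNReal

/-- Admissibility of a parameter tuple `(α, p, q)` with finite `p, q`:
`1/2 ≤ 1/p ≤ α/2 + 1/2` and `q ≤ 2` in the limiting case `1/p = α/2 + 1/2`. -/
def AdmissibleT (α p q : ℝ) : Prop :=
  0 < p ∧ 0 < q ∧ 1 / 2 ≤ 1 / p ∧ 1 / p ≤ α / 2 + 1 / 2 ∧ (1 / p = α / 2 + 1 / 2 → q ≤ 2)

/-- The `b^α_{p,q}`-quasi-norm (to the power one, as an extended real) of a sequence
`a = (a_{j,λ})_{j ∈ ℕ₀, λ ∈ Λ_j}` of nonnegative extended reals. -/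
noncomputable def bNormE {ι : Type*} (Λ : ℕ → Finset ι) (α p q : ℝ) (a : ℕ → ι → ℝ≥0∞) : ℝ≥0∞ :=
  (∑' j : ℕ, (2 : ℝ≥0∞) ^ ((j : ℝ) * (α + 2 * (1 / 2 - 1 / p)) * q) *
    (∑ l ∈ Λ j, (a j l) ^ p) ^ (q / p)) ^ (1 / q)

lemma aux_ofReal_two_rpow (x : ℝ) :
    ENNReal.ofReal ((2 : ℝ) ^ x) = (2 : ℝ≥0∞) ^ x := by
  rw [← ENNReal.ofReal_rpow_of_pos (by norm_num : (0:ℝ) < 2)]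
  norm_num

/-- The `j`-th term of the quasi-norm for the constant-in-`λ` sequence. -/
lemma aux_term_eq {ι : Type*} (Λ : ℕ → Finset ι) (β p q ν : ℝ) (hp : 0 < p) (hq : 0 < q) (j : ℕ) :
    (2 : ℝ≥0∞) ^ ((j : ℝ) * (β + 2 * (1 / 2 - 1 / p)) * q) *
      (∑ l ∈ Λ j, (ENNReal.ofReal ((2 : ℝ) ^ (-(j : ℝ) * ν))) ^ p) ^ (q / p)
    = ((Λ j).card : ℝ≥0∞) ^ (q / p) *
        (2 : ℝ≥0∞) ^ ((j : ℝ) * (q * (β + 1 - 2 / p - ν))) := by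
  rw [aux_ofReal_two_rpow, Finset.sum_const, nsmul_eq_mul, ← ENNReal.rpow_mul,
    ENNReal.mul_rpow_of_nonneg _ _ (by positivity : (0:ℝ) ≤ q / p), ← ENNReal.rpow_mul,
    mul_left_comm, ← ENNReal.rpow_add _ _ (by norm_num) (by norm_num)]
  congr 2
  field_simp
  ring

/-- Upper/lower card bound transferred to `ℝ≥0∞`. -/
lemma aux_card_le {ι : Type*} (Λ : ℕ → Finset ι) (C : ℝ) (hC : 0 < C)
    (h : ∀ j : ℕ, ((Λ j).card : ℝ) ≤ C * 2 ^ (2 * j)) (j : ℕ) :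
    ((Λ j).card : ℝ≥0∞) ≤ ENNReal.ofReal C * (2 : ℝ≥0∞) ^ ((2 * j : ℕ) : ℝ) := by
  have := ENNReal.ofReal_le_ofReal (h j)
  rwa [ENNReal.ofReal_natCast, ENNReal.ofReal_mul hC.le, ENNReal.ofReal_pow (by norm_num),
    show ENNReal.ofReal 2 = 2 by norm_num, ← ENNReal.rpow_natCast] at this

lemma aux_card_ge {ι : Type*} (Λ : ℕ → Finset ι) (c : ℝ) (hc : 0 < c)
    (h : ∀ j : ℕ, c * 2 ^ (2 * j) ≤ ((Λ j).card : ℝ)) (j : ℕ) :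
    ENNReal.ofReal c * (2 : ℝ≥0∞) ^ ((2 * j : ℕ) : ℝ) ≤ ((Λ j).card : ℝ≥0∞) := by
  have := ENNReal.ofReal_le_ofReal (h j)
  rwa [ENNReal.ofReal_natCast, ENNReal.ofReal_mul hc.le, ENNReal.ofReal_pow (by norm_num),
    show ENNReal.ofReal 2 = 2 by norm_num, ← ENNReal.rpow_natCast] at this

/-- If `γ < 0`, there is no embedding `b^{α+γ}_{p₀,q₀} ↪ b^α_{p₁,q₁}`: the sequence
`a*` with `a*_{j,λ} = 2^{-j(1+α+γ/2)}` belongs to the first space but not to the second. -/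
theorem stmt6 {ι : Type*} (Λ : ℕ → Finset ι) (c C : ℝ) (hc : 0 < c) (hC : 0 < C)
    (hcard : ∀ j : ℕ, c * 2 ^ (2 * j) ≤ ((Λ j).card : ℝ) ∧ ((Λ j).card : ℝ) ≤ C * 2 ^ (2 * j))
    (α γ p₀ q₀ p₁ q₁ : ℝ) (hγ : γ < 0)
    (adm₀ : AdmissibleT (α + γ) p₀ q₀) (adm₁ : AdmissibleT α p₁ q₁) :
    bNormE Λ (α + γ) p₀ q₀
        (fun j _ => ENNReal.ofReal ((2 : ℝ) ^ (-(j : ℝ) * (1 + α + γ / 2)))) < ⊤ ∧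
    bNormE Λ α p₁ q₁
        (fun j _ => ENNReal.ofReal ((2 : ℝ) ^ (-(j : ℝ) * (1 + α + γ / 2)))) = ⊤ := by
  obtain ⟨hp₀, hq₀, -, -, -⟩ := adm₀
  obtain ⟨hp₁, hq₁, -, -, -⟩ := adm₁
  set ν : ℝ := 1 + α + γ / 2 with hν
  constructor
  · -- finiteness in `b^{α+γ}_{p₀,q₀}`
    unfold bNormE
    set K : ℝ≥0∞ := (ENNReal.ofReal C) ^ (q₀ / p₀) with hK
    set r : ℝ≥0∞ := (2 : ℝ≥0∞) ^ (q₀ * γ / 2) with hr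
    have hr1 : r < 1 := by
      rw [hr]
      calc (2 : ℝ≥0∞) ^ (q₀ * γ / 2) < 2 ^ (0:ℝ) := by
            exact ENNReal.rpow_lt_rpow_of_exponent_lt (by norm_num) (by norm_num)
              (by nlinarith)
        _ = 1 := by simp
    have hbound : ∀ j : ℕ,
        (2 : ℝ≥0∞) ^ ((j : ℝ) * (α + γ + 2 * (1 / 2 - 1 / p₀)) * q₀) *
          (∑ l ∈ Λ j, (ENNReal.ofReal ((2 : ℝ) ^ (-(j : ℝ) * ν))) ^ p₀) ^ (q₀ / p₀)
        ≤ K * r ^ j := by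
      intro j
      rw [aux_term_eq Λ (α + γ) p₀ q₀ ν hp₀ hq₀ j]
      have h1 : ((Λ j).card : ℝ≥0∞) ^ (q₀ / p₀)
          ≤ K * (2 : ℝ≥0∞) ^ (((2 * j : ℕ) : ℝ) * (q₀ / p₀)) := by
        calc ((Λ j).card : ℝ≥0∞) ^ (q₀ / p₀)
            ≤ (ENNReal.ofReal C * (2 : ℝ≥0∞) ^ ((2 * j : ℕ) : ℝ)) ^ (q₀ / p₀) :=
              ENNReal.rpow_le_rpow (aux_card_le Λ C hC (fun j => (hcard j).2) j)
                (by positivity)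
          _ = K * (2 : ℝ≥0∞) ^ (((2 * j : ℕ) : ℝ) * (q₀ / p₀)) := by
              rw [ENNReal.mul_rpow_of_nonneg _ _ (by positivity : (0:ℝ) ≤ q₀ / p₀),
                ← ENNReal.rpow_mul]
      calc ((Λ j).card : ℝ≥0∞) ^ (q₀ / p₀) *
            (2 : ℝ≥0∞) ^ ((j : ℝ) * (q₀ * (α + γ + 1 - 2 / p₀ - ν)))
          ≤ (K * (2 : ℝ≥0∞) ^ (((2 * j : ℕ) : ℝ) * (q₀ / p₀))) *
            (2 : ℝ≥0∞) ^ ((j : ℝ) * (q₀ * (α + γ + 1 - 2 / p₀ - ν))) :=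
            mul_le_mul_left h1 _
        _ = K * (2 : ℝ≥0∞) ^ (((2 * j : ℕ) : ℝ) * (q₀ / p₀) +
              (j : ℝ) * (q₀ * (α + γ + 1 - 2 / p₀ - ν))) := by
            rw [mul_assoc, ← ENNReal.rpow_add _ _ (by norm_num) (by norm_num)]
        _ = K * r ^ j := by
            congr 1
            rw [hr, ← ENNReal.rpow_natCast ((2:ℝ≥0∞) ^ (q₀ * γ / 2)) j, ← ENNReal.rpow_mul]
            congr 1
            push_cast
            rw [hν]
            field_simp
            ring
    have hsum : (∑' j : ℕ, (2 : ℝ≥0∞) ^ ((j : ℝ) * (α + γ + 2 * (1 / 2 - 1 / p₀)) * q₀) *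
          (∑ l ∈ Λ j, (ENNReal.ofReal ((2 : ℝ) ^ (-(j : ℝ) * ν))) ^ p₀) ^ (q₀ / p₀))
        ≤ K * (1 - r)⁻¹ := by
      calc _ ≤ ∑' j : ℕ, K * r ^ j := ENNReal.tsum_le_tsum hbound
        _ = K * ∑' j : ℕ, r ^ j := ENNReal.tsum_mul_left
        _ = K * (1 - r)⁻¹ := by rw [ENNReal.tsum_geometric]
    have hKfin : K * (1 - r)⁻¹ < ⊤ := by
      apply ENNReal.mul_lt_top
      · exact ENNReal.rpow_lt_top_of_nonneg (by positivity) ENNReal.ofReal_ne_top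
      · simp [ENNReal.inv_lt_top, tsub_pos_of_lt hr1]
    exact ENNReal.rpow_lt_top_of_nonneg (by positivity)
      (lt_of_le_of_lt hsum hKfin).ne
  · -- not in `b^α_{p₁,q₁}`
    unfold bNormE
    set κ : ℝ≥0∞ := (ENNReal.ofReal c) ^ (q₁ / p₁) with hκ
    have hκ0 : κ ≠ 0 := by
      rw [hκ]
      exact (ENNReal.rpow_pos (ENNReal.ofReal_pos.mpr hc) ENNReal.ofReal_ne_top).ne'
    have hbound : ∀ j : ℕ, κ ≤
        (2 : ℝ≥0∞) ^ ((j : ℝ) * (α + 2 * (1 / 2 - 1 / p₁)) * q₁) *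
          (∑ l ∈ Λ j, (ENNReal.ofReal ((2 : ℝ) ^ (-(j : ℝ) * ν))) ^ p₁) ^ (q₁ / p₁) := by
      intro j
      rw [aux_term_eq Λ α p₁ q₁ ν hp₁ hq₁ j]
      have h1 : κ * (2 : ℝ≥0∞) ^ (((2 * j : ℕ) : ℝ) * (q₁ / p₁))
          ≤ ((Λ j).card : ℝ≥0∞) ^ (q₁ / p₁) := by
        calc κ * (2 : ℝ≥0∞) ^ (((2 * j : ℕ) : ℝ) * (q₁ / p₁))
            = (ENNReal.ofReal c * (2 : ℝ≥0∞) ^ ((2 * j : ℕ) : ℝ)) ^ (q₁ / p₁) := by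
              rw [ENNReal.mul_rpow_of_nonneg _ _ (by positivity : (0:ℝ) ≤ q₁ / p₁),
                ← ENNReal.rpow_mul]
          _ ≤ ((Λ j).card : ℝ≥0∞) ^ (q₁ / p₁) :=
              ENNReal.rpow_le_rpow (aux_card_ge Λ c hc (fun j => (hcard j).1) j)
                (by positivity)
      calc κ = κ * (2 : ℝ≥0∞) ^ (0 : ℝ) := by simp
        _ ≤ κ * (2 : ℝ≥0∞) ^ (((2 * j : ℕ) : ℝ) * (q₁ / p₁) +
              (j : ℝ) * (q₁ * (α + 1 - 2 / p₁ - ν))) := by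
            apply mul_le_mul_right
            apply ENNReal.rpow_le_rpow_of_exponent_le (by norm_num)
            have : ((2 * j : ℕ) : ℝ) * (q₁ / p₁) + (j : ℝ) * (q₁ * (α + 1 - 2 / p₁ - ν))
                = (j : ℝ) * (q₁ * (-γ / 2)) := by
              push_cast
              rw [hν]
              field_simp
              ring
            rw [this]
            have : (0:ℝ) ≤ q₁ * (-γ / 2) := by nlinarith
            positivity
        _ = κ * ((2 : ℝ≥0∞) ^ (((2 * j : ℕ) : ℝ) * (q₁ / p₁)) *
              (2 : ℝ≥0∞) ^ ((j : ℝ) * (q₁ * (α + 1 - 2 / p₁ - ν)))) := by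
            rw [← ENNReal.rpow_add _ _ (by norm_num) (by norm_num)]
        _ = (κ * (2 : ℝ≥0∞) ^ (((2 * j : ℕ) : ℝ) * (q₁ / p₁))) *
              (2 : ℝ≥0∞) ^ ((j : ℝ) * (q₁ * (α + 1 - 2 / p₁ - ν))) := by ring
        _ ≤ ((Λ j).card : ℝ≥0∞) ^ (q₁ / p₁) *
              (2 : ℝ≥0∞) ^ ((j : ℝ) * (q₁ * (α + 1 - 2 / p₁ - ν))) :=
            mul_le_mul_left h1 _
    have hsum : (∑' j : ℕ, (2 : ℝ≥0∞) ^ ((j : ℝ) * (α + 2 * (1 / 2 - 1 / p₁)) * q₁) *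
          (∑ l ∈ Λ j, (ENNReal.ofReal ((2 : ℝ) ^ (-(j : ℝ) * ν))) ^ p₁) ^ (q₁ / p₁)) = ⊤ := by
      apply top_le_iff.mp
      calc (⊤ : ℝ≥0∞) = ∑' _ : ℕ, κ := (ENNReal.tsum_const_eq_top_of_ne_zero hκ0).symm
        _ ≤ _ := ENNReal.tsum_le_tsum hbound
    rw [hsum]
    exact ENNReal.top_rpow_of_pos (by positivity)
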